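/- Let F : ℝ^ℓ → ℝ be C^r and φ : ℝ → ℝ be C^r with ‖φ‖_{C^r} ≤ 1, and suppose every partial derivative D^β F with β strictly smaller than a multi-index α (in degree-lexicographic order, with α₁ ≥ 1 and |α| ≤ r) is bounded by 1. Define G(x) = F(φ(x₁), x₂, …, x_ℓ). Then D^β G is bounded by a constant C(ℓ,r) for every β < α, and D^α G equals (φ')^{α₁}·(D^α F)(φ(x₁), x₂,…,x_ℓ) plus a term bounded by C(ℓ,r). -/

import Mathlib

open Set

/-- The partial derivative in direction `i`. -/
noncomputable def partialDeriv {ℓ : ℕ} (i : Fin ℓ) (F : (Fin ℓ → ℝ) → ℝ) :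
    (Fin ℓ → ℝ) → ℝ :=
  fun x => fderiv ℝ F x (Pi.single i 1)

/-- The iterated partial derivative `D^β F` associated with a multi-index `β`. -/
noncomputable def multiDeriv {ℓ : ℕ} (β : Fin ℓ → ℕ) (F : (Fin ℓ → ℝ) → ℝ) :
    (Fin ℓ → ℝ) → ℝ :=
  (List.finRange ℓ).foldr (fun i G => (partialDeriv i)^[β i] G) F

/-- Degree-lexicographic order on multi-indices. -/
def DegLexLT {ℓ : ℕ} (β α : Fin ℓ → ℕ) : Prop :=
  (∑ i, β i) < (∑ i, α i) ∨
    ((∑ i, β i) = (∑ i, α i) ∧ ∃ i, (∀ j, j < i → β j = α j) ∧ β i < α i)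

namespace RFV

variable {ℓ : ℕ}

/-- The reparametrization map. -/
def rp (φ : ℝ → ℝ) (x : Fin (ℓ + 1) → ℝ) : Fin (ℓ + 1) → ℝ :=
  Function.update x 0 (φ (x 0))

/-- The derivative of `rp φ` at `x`. -/
noncomputable def rpD (φ : ℝ → ℝ) (x : Fin (ℓ + 1) → ℝ) :
    (Fin (ℓ + 1) → ℝ) →L[ℝ] (Fin (ℓ + 1) → ℝ) :=
  ContinuousLinearMap.pi (fun i =>
    if i = 0 then deriv φ (x 0) •
        (ContinuousLinearMap.proj (R := ℝ) (φ := fun _ : Fin (ℓ + 1) => ℝ) 0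
          : (Fin (ℓ + 1) → ℝ) →L[ℝ] ℝ)
      else ContinuousLinearMap.proj i)

/-- projection as a CLM between normed spaces -/
noncomputable def pr (i : Fin (ℓ + 1)) : (Fin (ℓ + 1) → ℝ) →L[ℝ] ℝ :=
  ContinuousLinearMap.proj (R := ℝ) (φ := fun _ : Fin (ℓ + 1) => ℝ) i

lemma hasFDerivAt_rp {φ : ℝ → ℝ} {x : Fin (ℓ + 1) → ℝ}
    (hφ : DifferentiableAt ℝ φ (x 0)) : HasFDerivAt (rp φ) (rpD φ x) x := by
  rw [hasFDerivAt_pi']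
  intro i
  rw [rpD, ContinuousLinearMap.proj_pi]
  by_cases h : i = 0
  · subst h
    simp only [if_pos rfl]
    have : (fun y : Fin (ℓ + 1) → ℝ => rp φ y 0) = φ ∘ (fun y => y 0) := by
      funext y; simp [rp]
    rw [this]
    exact hφ.hasDerivAt.comp_hasFDerivAt x ((pr (ℓ := ℓ) 0).hasFDerivAt)
  · simp only [if_neg h]
    have : (fun y : Fin (ℓ + 1) → ℝ => rp φ y i) = fun y => y i := by
      funext y; simp [rp, Function.update_of_ne h]
    rw [this]
    exact (pr (ℓ := ℓ) i).hasFDerivAt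

lemma rpD_single_zero (φ : ℝ → ℝ) (x : Fin (ℓ + 1) → ℝ) :
    rpD φ x (Pi.single 0 1) = deriv φ (x 0) • (Pi.single 0 1 : Fin (ℓ + 1) → ℝ) := by
  funext i
  simp only [rpD, ContinuousLinearMap.pi_apply]
  by_cases h : i = 0
  · subst h; simp
  · simp [if_neg h, Pi.single_eq_of_ne h]

lemma rpD_single_ne (φ : ℝ → ℝ) (x : Fin (ℓ + 1) → ℝ) {j : Fin (ℓ + 1)} (hj : j ≠ 0) :
    rpD φ x (Pi.single j 1) = Pi.single j 1 := by
  funext i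
  simp only [rpD, ContinuousLinearMap.pi_apply]
  by_cases h : i = 0
  · subst h
    simp [if_pos rfl, Pi.single_eq_of_ne (Ne.symm hj)]
  · simp [if_neg h]

lemma diffAt_comp_rp {φ : ℝ → ℝ} {H : (Fin (ℓ + 1) → ℝ) → ℝ} {x : Fin (ℓ + 1) → ℝ}
    (hφ : DifferentiableAt ℝ φ (x 0)) (hH : DifferentiableAt ℝ H (rp φ x)) :
    DifferentiableAt ℝ (fun y => H (rp φ y)) x :=
  (hH.hasFDerivAt.comp x (hasFDerivAt_rp hφ)).differentiableAt

lemma pd_zero_comp_rp {φ : ℝ → ℝ} {H : (Fin (ℓ + 1) → ℝ) → ℝ} {x : Fin (ℓ + 1) → ℝ}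
    (hφ : DifferentiableAt ℝ φ (x 0)) (hH : DifferentiableAt ℝ H (rp φ x)) :
    partialDeriv 0 (fun y => H (rp φ y)) x = deriv φ (x 0) * partialDeriv 0 H (rp φ x) := by
  have h := (hH.hasFDerivAt.comp x (hasFDerivAt_rp hφ)).fderiv
  rw [partialDeriv, show (fun y => H (rp φ y)) = H ∘ rp φ from rfl, h]
  simp only [ContinuousLinearMap.coe_comp', Function.comp_apply, rpD_single_zero]
  rw [map_smul]
  simp [partialDeriv, smul_eq_mul]

lemma pd_ne_comp_rp {φ : ℝ → ℝ} {H : (Fin (ℓ + 1) → ℝ) → ℝ} {x : Fin (ℓ + 1) → ℝ}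
    {j : Fin (ℓ + 1)} (hj : j ≠ 0)
    (hφ : DifferentiableAt ℝ φ (x 0)) (hH : DifferentiableAt ℝ H (rp φ x)) :
    partialDeriv j (fun y => H (rp φ y)) x = partialDeriv j H (rp φ x) := by
  have h := (hH.hasFDerivAt.comp x (hasFDerivAt_rp hφ)).fderiv
  rw [partialDeriv, show (fun y => H (rp φ y)) = H ∘ rp φ from rfl, h]
  simp only [ContinuousLinearMap.coe_comp', Function.comp_apply, rpD_single_ne φ x hj]
  rfl

/- basic D0 calculus -/
lemma diffAt_eval0 {g : ℝ → ℝ} {x : Fin (ℓ + 1) → ℝ} (hg : DifferentiableAt ℝ g (x 0)) :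
    DifferentiableAt ℝ (fun y : Fin (ℓ + 1) → ℝ => g (y 0)) x :=
  (hg.hasDerivAt.comp_hasFDerivAt x ((pr (ℓ := ℓ) 0).hasFDerivAt)).differentiableAt

lemma pd_zero_eval0 {g : ℝ → ℝ} {x : Fin (ℓ + 1) → ℝ} (hg : DifferentiableAt ℝ g (x 0)) :
    partialDeriv 0 (fun y : Fin (ℓ + 1) → ℝ => g (y 0)) x = deriv g (x 0) := by
  have h := (hg.hasDerivAt.comp_hasFDerivAt x ((pr (ℓ := ℓ) 0).hasFDerivAt)).fderiv
  rw [partialDeriv]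
  rw [show (fun y : Fin (ℓ + 1) → ℝ => g (y 0)) = g ∘ ⇑(pr (ℓ := ℓ) 0) from rfl, h]
  simp [pr]

lemma pd_mul {f g : (Fin (ℓ + 1) → ℝ) → ℝ} {x : Fin (ℓ + 1) → ℝ}
    (hf : DifferentiableAt ℝ f x) (hg : DifferentiableAt ℝ g x) :
    partialDeriv 0 (fun y => f y * g y) x
      = partialDeriv 0 f x * g x + f x * partialDeriv 0 g x := by
  rw [partialDeriv, fderiv_fun_mul hf hg]
  simp [partialDeriv, smul_eq_mul]
  ring

lemma pd_add {f g : (Fin (ℓ + 1) → ℝ) → ℝ} {x : Fin (ℓ + 1) → ℝ}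
    (hf : DifferentiableAt ℝ f x) (hg : DifferentiableAt ℝ g x) :
    partialDeriv 0 (fun y => f y + g y) x = partialDeriv 0 f x + partialDeriv 0 g x := by
  rw [partialDeriv, fderiv_fun_add hf hg]; rfl

end RFV

namespace RFV

variable {ℓ : ℕ}

/- smoothness of partial derivatives -/
lemma contDiff_pd {m : ℕ} {i : Fin (ℓ + 1)} {F : (Fin (ℓ + 1) → ℝ) → ℝ}
    (hF : ContDiff ℝ ((m + 1 : ℕ) : ℕ∞) F) : ContDiff ℝ ((m : ℕ) : ℕ∞) (partialDeriv i F) := by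
  have h1 : ContDiff ℝ ((m : ℕ) : ℕ∞) (fderiv ℝ F) :=
    hF.fderiv_right (by push_cast; rfl)
  have : partialDeriv i F =
      (ContinuousLinearMap.apply ℝ ℝ (Pi.single i 1)) ∘ (fderiv ℝ F) := by
    funext x; simp [partialDeriv, ContinuousLinearMap.apply_apply]
  rw [this]
  exact (ContinuousLinearMap.apply ℝ ℝ (Pi.single i 1)).contDiff.comp h1

lemma contDiff_pd_iter {m k : ℕ} {i : Fin (ℓ + 1)} {F : (Fin (ℓ + 1) → ℝ) → ℝ}
    (hF : ContDiff ℝ ((m + k : ℕ) : ℕ∞) F) :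
    ContDiff ℝ ((m : ℕ) : ℕ∞) ((partialDeriv i)^[k] F) := by
  induction k generalizing m F with
  | zero => simpa using hF
  | succ k ih =>
    rw [Function.iterate_succ_apply']
    apply contDiff_pd
    apply ih (m := m + 1)
    have e : m + 1 + k = m + (k + 1) := by omega
    rw [e]; exact hF

lemma diff_pd_iter {k m : ℕ} {i : Fin (ℓ + 1)} {F : (Fin (ℓ + 1) → ℝ) → ℝ}
    (hF : ContDiff ℝ ((k : ℕ) : ℕ∞) F) (hm : m + 1 ≤ k) :
    Differentiable ℝ ((partialDeriv i)^[m] F) := by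
  have h : ContDiff ℝ ((1 + m : ℕ) : ℕ∞) F := hF.of_le (by exact_mod_cast by omega)
  exact (contDiff_pd_iter (m := 1) h).differentiable (by simp)

lemma diffAt_itd {k j : ℕ} {φ : ℝ → ℝ} (hφ : ContDiff ℝ ((k : ℕ) : ℕ∞) φ) (hj : j + 1 ≤ k)
    (t : ℝ) : DifferentiableAt ℝ (iteratedDeriv j φ) t := by
  rw [iteratedDeriv_eq_iterate]
  have h : ContDiff ℝ ((1 + j : ℕ) : ℕ∞) φ := hφ.of_le (by exact_mod_cast by omega)
  exact ((ContDiff.iterate_deriv' 1 j h).differentiable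
    (by simp)).differentiableAt

/- combinatorial bookkeeping -/
def bumps : List ℕ → List (List ℕ)
  | [] => []
  | a :: t => ((a + 1) :: t) :: (bumps t).map (List.cons a)

def stepTerm (q : List ℕ) : List (List ℕ) := (1 :: q) :: bumps q

def fdb : ℕ → List (List ℕ)
  | 0 => [[]]
  | k + 1 => (fdb k).flatMap stepTerm

def errs : ℕ → List (List ℕ)
  | 0 => []
  | k + 1 => bumps (List.replicate k 1) ++ (errs k).flatMap stepTerm

lemma fdb_eq (k : ℕ) : fdb k = List.replicate k 1 :: errs k := by
  induction k with
  | zero => rfl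
  | succ k ih =>
    rw [fdb, ih, List.flatMap_cons, errs]
    rfl

lemma mem_bumps {q q' : List ℕ} (h : q' ∈ bumps q) :
    q'.sum = q.sum + 1 ∧ q'.length = q.length := by
  induction q generalizing q' with
  | nil => simp [bumps] at h
  | cons a t ih =>
    rw [bumps] at h
    rcases List.mem_cons.1 h with h | h
    · subst h; simp; omega
    · obtain ⟨q'', hq'', rfl⟩ := List.mem_map.1 h
      obtain ⟨h1, h2⟩ := ih hq''
      simp [h1, h2]; omega

lemma mem_fdb {k : ℕ} {q : List ℕ} (h : q ∈ fdb k) : q.sum = k ∧ q.length ≤ k := by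
  induction k generalizing q with
  | zero => simp [fdb] at h; simp [h]
  | succ k ih =>
    rw [fdb, List.mem_flatMap] at h
    obtain ⟨q', hq', h⟩ := h
    obtain ⟨h1, h2⟩ := ih hq'
    rcases List.mem_cons.1 h with h | h
    · subst h; simp [h1]; omega
    · obtain ⟨h3, h4⟩ := mem_bumps h
      omega

lemma mem_errs {k : ℕ} {q : List ℕ} (h : q ∈ errs k) : q.sum = k ∧ q.length < k := by
  induction k generalizing q with
  | zero => simp [errs] at h
  | succ k ih =>
    rw [errs, List.mem_append] at h
    rcases h with h | h
    · obtain ⟨h1, h2⟩ := mem_bumps h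
      simp at h1 h2 ⊢; omega
    · rw [List.mem_flatMap] at h
      obtain ⟨q', hq', h⟩ := h
      obtain ⟨h1, h2⟩ := ih hq'
      rcases List.mem_cons.1 h with h | h
      · subst h; simp; omega
      · obtain ⟨h3, h4⟩ := mem_bumps h
        omega

lemma elem_le_sum {q : List ℕ} {j : ℕ} (h : j ∈ q) : j ≤ q.sum := by
  induction q with
  | nil => simp at h
  | cons a t ih =>
    rcases List.mem_cons.1 h with h | h
    · subst h; simp
    · simpa using le_trans (ih h) (by simp)

/- the value of a term -/
noncomputable def PP (q : List ℕ) (φ : ℝ → ℝ) (x : Fin (ℓ + 1) → ℝ) : ℝ :=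
  (q.map fun j => iteratedDeriv j φ (x 0)).prod

noncomputable def termVal (q : List ℕ) (φ : ℝ → ℝ) (H : (Fin (ℓ + 1) → ℝ) → ℝ)
    (x : Fin (ℓ + 1) → ℝ) : ℝ :=
  PP q φ x * (partialDeriv 0)^[q.length] H (rp φ x)

end RFV

namespace RFV

variable {ℓ : ℕ}

lemma PP_step {q : List ℕ} {φ : ℝ → ℝ} {x : Fin (ℓ + 1) → ℝ}
    (h : ∀ j ∈ q, DifferentiableAt ℝ (iteratedDeriv j φ) (x 0)) :
    DifferentiableAt ℝ (PP q φ) x ∧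
      partialDeriv 0 (PP q φ) x = ((bumps q).map (fun q' => PP q' φ x)).sum := by
  induction q with
  | nil =>
    have hPP : PP ([] : List ℕ) φ = fun _ : Fin (ℓ + 1) → ℝ => (1 : ℝ) := by
      funext y; simp [PP]
    rw [hPP]
    refine ⟨differentiableAt_const 1, ?_⟩
    simp [partialDeriv, bumps]
  | cons a t ih =>
    have hPP : PP (a :: t) φ = fun y : Fin (ℓ + 1) → ℝ =>
        iteratedDeriv a φ (y 0) * PP t φ y := by
      funext y; simp [PP]
    have ha : DifferentiableAt ℝ (iteratedDeriv a φ) (x 0) := h a (by simp)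
    have ht := ih (fun j hj => h j (by simp [hj]))
    have hfa : DifferentiableAt ℝ (fun y : Fin (ℓ + 1) → ℝ => iteratedDeriv a φ (y 0)) x :=
      diffAt_eval0 ha
    constructor
    · rw [hPP]; exact hfa.mul ht.1
    · rw [hPP, pd_mul hfa ht.1, pd_zero_eval0 ha, ht.2]
      rw [bumps, List.map_cons, List.sum_cons, List.map_map]
      have h1 : PP ((a + 1) :: t) φ x = iteratedDeriv (a + 1) φ (x 0) * PP t φ x := by
        simp [PP]
      have h2 : ((bumps t).map ((fun q' => PP q' φ x) ∘ List.cons a)).sum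
          = iteratedDeriv a φ (x 0) * ((bumps t).map (fun q' => PP q' φ x)).sum := by
        rw [← List.sum_map_mul_left]
        congr 1
        try (apply List.map_congr_left; intro q' _; simp [Function.comp, PP])
      rw [h1, h2, ← iteratedDeriv_succ]
      try ring

lemma termStep {k : ℕ} {q : List ℕ} {φ : ℝ → ℝ} {H : (Fin (ℓ + 1) → ℝ) → ℝ}
    {x : Fin (ℓ + 1) → ℝ}
    (hφ : ContDiff ℝ ((k + 1 : ℕ) : ℕ∞) φ) (hH : ContDiff ℝ ((k + 1 : ℕ) : ℕ∞) H)
    (hsum : q.sum ≤ k) (hlen : q.length ≤ k) :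
    DifferentiableAt ℝ (termVal q φ H) x ∧
      partialDeriv 0 (termVal q φ H) x
        = ((stepTerm q).map (fun q' => termVal q' φ H x)).sum := by
  have hφ1 : DifferentiableAt ℝ φ (x 0) :=
    (hφ.differentiable (by simp)).differentiableAt
  have hj : ∀ j ∈ q, DifferentiableAt ℝ (iteratedDeriv j φ) (x 0) := by
    intro j hjq
    exact diffAt_itd hφ (by have := elem_le_sum hjq; omega) _
  have hK : Differentiable ℝ ((partialDeriv 0)^[q.length] H) :=
    diff_pd_iter hH (by omega)
  have hKx : DifferentiableAt ℝ (fun y => (partialDeriv 0)^[q.length] H (rp φ y)) x :=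
    diffAt_comp_rp hφ1 (hK _)
  have hP := PP_step (q := q) (φ := φ) (x := x) hj
  have hTV : termVal q φ H = fun y => PP q φ y * (partialDeriv 0)^[q.length] H (rp φ y) := rfl
  constructor
  · rw [hTV]; exact hP.1.mul hKx
  · rw [hTV, pd_mul hP.1 hKx, hP.2, pd_zero_comp_rp hφ1 (hK _)]
    have hit : partialDeriv 0 ((partialDeriv 0)^[q.length] H)
        = (partialDeriv 0)^[q.length + 1] H := by
      rw [Function.iterate_succ_apply']
    rw [hit]
    rw [stepTerm, List.map_cons, List.sum_cons]
    have h1 : termVal (1 :: q) φ H x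
        = deriv φ (x 0) * PP q φ x * (partialDeriv 0)^[q.length + 1] H (rp φ x) := by
      simp [termVal, PP, iteratedDeriv_one]
      try ring
    have h2 : ((bumps q).map (fun q' => termVal q' φ H x)).sum
        = ((bumps q).map (fun q' => PP q' φ x)).sum
            * (partialDeriv 0)^[q.length] H (rp φ x) := by
      rw [← List.sum_map_mul_right]
      congr 1
      try (apply List.map_congr_left; intro q' hq'; rw [termVal, (mem_bumps hq').2])
    rw [h1, h2]
    try ring

lemma sumStep {k : ℕ} {Q : List (List ℕ)} {φ : ℝ → ℝ} {H : (Fin (ℓ + 1) → ℝ) → ℝ}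
    {x : Fin (ℓ + 1) → ℝ}
    (hφ : ContDiff ℝ ((k + 1 : ℕ) : ℕ∞) φ) (hH : ContDiff ℝ ((k + 1 : ℕ) : ℕ∞) H)
    (hQ : ∀ q ∈ Q, q.sum ≤ k ∧ q.length ≤ k) :
    DifferentiableAt ℝ (fun y => (Q.map (fun q => termVal q φ H y)).sum) x ∧
      partialDeriv 0 (fun y => (Q.map (fun q => termVal q φ H y)).sum) x
        = ((Q.flatMap stepTerm).map (fun q => termVal q φ H x)).sum := by
  induction Q with
  | nil =>
    constructor
    · simpa using differentiableAt_const (0 : ℝ)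
    · simp [partialDeriv]
  | cons q Q ih =>
    have hq := hQ q (by simp)
    have hrest := ih (fun q' hq' => hQ q' (by simp [hq']))
    have hterm := termStep (x := x) hφ hH hq.1 hq.2
    have hsplit : (fun y => (((q :: Q).map (fun q' => termVal q' φ H y))).sum)
        = fun y => termVal q φ H y + (Q.map (fun q' => termVal q' φ H y)).sum := by
      funext y; simp
    constructor
    · rw [hsplit]; exact hterm.1.add hrest.1
    · rw [hsplit, pd_add hterm.1 hrest.1, hterm.2, hrest.2,
        List.flatMap_cons, List.map_append, List.sum_append]

lemma rep (k : ℕ) (φ : ℝ → ℝ) (H : (Fin (ℓ + 1) → ℝ) → ℝ)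
    (hφ : ContDiff ℝ ((k : ℕ) : ℕ∞) φ) (hH : ContDiff ℝ ((k : ℕ) : ℕ∞) H)
    (x : Fin (ℓ + 1) → ℝ) :
    (partialDeriv 0)^[k] (fun y => H (rp φ y)) x
      = ((fdb k).map (fun q => termVal q φ H x)).sum := by
  induction k generalizing x with
  | zero => simp [fdb, termVal, PP]
  | succ k ih =>
    have hφ' : ContDiff ℝ ((k : ℕ) : ℕ∞) φ := hφ.of_le (by exact_mod_cast by omega)
    have hH' : ContDiff ℝ ((k : ℕ) : ℕ∞) H := hH.of_le (by exact_mod_cast by omega)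
    have hIH : (partialDeriv 0)^[k] (fun y => H (rp φ y))
        = fun y => ((fdb k).map (fun q => termVal q φ H y)).sum :=
      funext (ih hφ' hH')
    rw [Function.iterate_succ_apply', hIH]
    have := (sumStep (k := k) (Q := fdb k) (x := x) hφ hH
      (fun q hq => by have := mem_fdb hq; omega)).2
    rw [this]
    rfl

end RFV

namespace RFV

variable {ℓ : ℕ}

/-- derivatives in the tail directions -/
noncomputable def tdv (γ : Fin ℓ → ℕ) (F : (Fin (ℓ + 1) → ℝ) → ℝ) : (Fin (ℓ + 1) → ℝ) → ℝ :=
  (List.finRange ℓ).foldr (fun i G => (partialDeriv i.succ)^[γ i] G) F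

lemma multiDeriv_split (β : Fin (ℓ + 1) → ℕ) (F : (Fin (ℓ + 1) → ℝ) → ℝ) :
    multiDeriv β F = (partialDeriv 0)^[β 0] (tdv (fun i => β i.succ) F) := by
  rw [multiDeriv, List.finRange_succ, List.foldr_cons, List.foldr_map]
  rfl

lemma contDiff_foldr (L : List (Fin ℓ)) (γ : Fin ℓ → ℕ) (m : ℕ)
    (F : (Fin (ℓ + 1) → ℝ) → ℝ)
    (hF : ContDiff ℝ ((m + (L.map γ).sum : ℕ) : ℕ∞) F) :
    ContDiff ℝ ((m : ℕ) : ℕ∞)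
      (L.foldr (fun i G => (partialDeriv i.succ)^[γ i] G) F) := by
  induction L generalizing m with
  | nil => simpa using hF
  | cons i L ih =>
    rw [List.foldr_cons]
    apply contDiff_pd_iter (m := m) (k := γ i)
    apply ih (m := m + γ i)
    have e : m + γ i + (L.map γ).sum = m + ((i :: L).map γ).sum := by
      simp; omega
    rw [e]; exact hF

lemma contDiff_tdv {γ : Fin ℓ → ℕ} {m : ℕ} {F : (Fin (ℓ + 1) → ℝ) → ℝ}
    (hF : ContDiff ℝ ((m + ∑ i, γ i : ℕ) : ℕ∞) F) :
    ContDiff ℝ ((m : ℕ) : ℕ∞) (tdv γ F) := by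
  apply contDiff_foldr
  rwa [← Fin.sum_univ_def]

/- commutation of tail derivatives with reparametrization -/
lemma comm_iter {k : ℕ} {i : Fin (ℓ + 1)} (hi : i ≠ 0) {φ : ℝ → ℝ}
    {H : (Fin (ℓ + 1) → ℝ) → ℝ} (hφ : Differentiable ℝ φ)
    (hH : ContDiff ℝ ((k : ℕ) : ℕ∞) H) :
    (partialDeriv i)^[k] (fun y => H (rp φ y)) = fun y => (partialDeriv i)^[k] H (rp φ y) := by
  induction k with
  | zero => simp
  | succ k ih =>
    rw [Function.iterate_succ_apply', Function.iterate_succ_apply',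
      ih (hH.of_le (by exact_mod_cast Nat.le_succ k))]
    funext x
    exact pd_ne_comp_rp hi (hφ _)
      ((diff_pd_iter (k := k + 1) (m := k) hH (le_refl _)) _)

lemma comm_foldr (L : List (Fin ℓ)) (γ : Fin ℓ → ℕ) {φ : ℝ → ℝ}
    {F : (Fin (ℓ + 1) → ℝ) → ℝ} (hφ : Differentiable ℝ φ)
    (hF : ContDiff ℝ (((L.map γ).sum : ℕ) : ℕ∞) F) :
    L.foldr (fun i G => (partialDeriv i.succ)^[γ i] G) (fun y => F (rp φ y))
      = fun y => (L.foldr (fun i G => (partialDeriv i.succ)^[γ i] G) F) (rp φ y) := by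
  induction L with
  | nil => rfl
  | cons i L ih =>
    rw [List.foldr_cons, List.foldr_cons,
      ih (hF.of_le (by
        exact_mod_cast (by simp only [List.map_cons, List.sum_cons]; omega :
          (L.map γ).sum ≤ ((i :: L).map γ).sum)))]
    exact comm_iter (Fin.succ_ne_zero i) hφ
      (contDiff_foldr L γ (γ i) F (by rwa [show γ i + (L.map γ).sum = ((i :: L).map γ).sum by simp]))

lemma comm_tdv {γ : Fin ℓ → ℕ} {φ : ℝ → ℝ} {F : (Fin (ℓ + 1) → ℝ) → ℝ}
    (hφ : Differentiable ℝ φ) (hF : ContDiff ℝ ((∑ i, γ i : ℕ) : ℕ∞) F) :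
    tdv γ (fun y => F (rp φ y)) = fun y => tdv γ F (rp φ y) :=
  comm_foldr _ _ hφ (by rwa [Fin.sum_univ_def] at hF)

end RFV

namespace RFV

variable {ℓ : ℕ}

noncomputable def wt (q : List ℕ) : ℝ := (q.map fun j => (Nat.factorial j : ℝ)).prod

lemma wt_nonneg (q : List ℕ) : 0 ≤ wt q := by
  induction q with
  | nil => simp [wt]
  | cons a t ih =>
    have : wt (a :: t) = (Nat.factorial a : ℝ) * wt t := by simp [wt]
    rw [this]
    exact mul_nonneg (by positivity) ih

lemma abs_PP_le {q : List ℕ} {φ : ℝ → ℝ} {x : Fin (ℓ + 1) → ℝ}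
    (hb : ∀ j ∈ q, |iteratedDeriv j φ (x 0)| ≤ (Nat.factorial j : ℝ)) :
    |PP q φ x| ≤ wt q := by
  induction q with
  | nil => simp [PP, wt]
  | cons a t ih =>
    have h1 : PP (a :: t) φ x = iteratedDeriv a φ (x 0) * PP t φ x := by simp [PP]
    have h2 : wt (a :: t) = (Nat.factorial a : ℝ) * wt t := by simp [wt]
    rw [h1, h2, abs_mul]
    exact mul_le_mul (hb a (by simp)) (ih fun j hj => hb j (by simp [hj]))
      (abs_nonneg _) (by positivity)

lemma abs_list_sum_le {σ : Type*} (Q : List σ) (f g : σ → ℝ)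
    (h : ∀ q ∈ Q, |f q| ≤ g q) : |(Q.map f).sum| ≤ (Q.map g).sum := by
  induction Q with
  | nil => simp
  | cons q Q ih =>
    simp only [List.map_cons, List.sum_cons]
    exact le_trans (abs_add_le _ _)
      (add_le_add (h q (by simp)) (ih fun q' hq' => h q' (by simp [hq'])))

end RFV

theorem reparametrize_first_variable (ℓ r : ℕ) :
    ∃ C : ℝ, 0 < C ∧
      ∀ (α : Fin (ℓ + 1) → ℕ), 1 ≤ α 0 → (∑ i, α i) ≤ r →
        ∀ (F : (Fin (ℓ + 1) → ℝ) → ℝ) (φ : ℝ → ℝ),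
          ContDiff ℝ (r : ℕ∞) F → ContDiff ℝ (r : ℕ∞) φ →
          (∀ j ≤ r, ∀ t : ℝ, |iteratedDeriv j φ t| ≤ (Nat.factorial j : ℝ)) →
          (∀ β : Fin (ℓ + 1) → ℕ, DegLexLT β α →
            ∀ x, |multiDeriv β F x| ≤ 1) →
          ((∀ β : Fin (ℓ + 1) → ℕ, DegLexLT β α →
              ∀ x, |multiDeriv β
                (fun y => F (Function.update y 0 (φ (y 0)))) x| ≤ C) ∧
            ∀ x, |multiDeriv α (fun y => F (Function.update y 0 (φ (y 0)))) x
              - (deriv φ (x 0)) ^ (α 0)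
                * multiDeriv α F (Function.update x 0 (φ (x 0)))| ≤ C) := by
  classical
  open RFV in
  set Cb : ℕ → ℝ := fun k => ((fdb k).map wt).sum with hCb
  have hCb_nonneg : ∀ k, 0 ≤ Cb k := by
    intro k
    apply List.sum_nonneg
    intro a ha
    obtain ⟨q, _, rfl⟩ := List.mem_map.1 ha
    exact wt_nonneg q
  refine ⟨1 + ∑ k ∈ Finset.range (r + 1), Cb k, ?_, ?_⟩
  · have : 0 ≤ ∑ k ∈ Finset.range (r + 1), Cb k :=
      Finset.sum_nonneg fun k _ => hCb_nonneg k
    linarith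
  set C : ℝ := 1 + ∑ k ∈ Finset.range (r + 1), Cb k with hC
  have hCbC : ∀ k ≤ r, Cb k ≤ C := by
    intro k hk
    have h1 : Cb k ≤ ∑ k ∈ Finset.range (r + 1), Cb k :=
      Finset.single_le_sum (fun k _ => hCb_nonneg k) (Finset.mem_range.2 (by omega))
    linarith
  intro α hα1 hαr F φ hF hφ hφb hFb
  open RFV in
  -- sums of updated multi-indices
  have sum_split : ∀ β : Fin (ℓ + 1) → ℕ, ∑ i, β i = β 0 + ∑ i : Fin ℓ, β i.succ :=
    fun β => Fin.sum_univ_succ β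
  have hr : 1 ≤ r := by have := sum_split α; omega
  have sum_update : ∀ (β : Fin (ℓ + 1) → ℕ) (m : ℕ),
      ∑ i, Function.update β 0 m i = m + ∑ i : Fin ℓ, β i.succ := by
    intro β m
    have hupd : ∀ i : Fin ℓ, Function.update β 0 m i.succ = β i.succ :=
      fun i => Function.update_of_ne (Fin.succ_ne_zero i) _ _
    rw [Fin.sum_univ_succ, Function.update_self]
    simp only [hupd]
  -- the main representation
  have main : ∀ β : Fin (ℓ + 1) → ℕ, (∑ i, β i) ≤ r → ∀ x,
      multiDeriv β (fun y => F (rp φ y)) x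
        = ((fdb (β 0)).map (fun q => termVal q φ (tdv (fun i => β i.succ) F) x)).sum := by
    intro β hβ x
    have hβ0 : β 0 ≤ r := by have := sum_split β; omega
    have hβt : (∑ i : Fin ℓ, β i.succ) ≤ r := by have := sum_split β; omega
    have hφ' : ContDiff ℝ ((β 0 : ℕ) : ℕ∞) φ := hφ.of_le (by exact_mod_cast hβ0)
    have hH : ContDiff ℝ ((β 0 : ℕ) : ℕ∞) (tdv (fun i => β i.succ) F) := by
      apply contDiff_tdv
      exact hF.of_le (by exact_mod_cast (by rw [← sum_split β]; exact hβ))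
    have hφd : Differentiable ℝ φ := hφ.differentiable (by exact_mod_cast (show r ≠ 0 by omega))
    rw [multiDeriv_split,
      comm_tdv hφd (hF.of_le (by exact_mod_cast hβt)),
      rep (β 0) φ _ hφ' hH x]
  -- identification of iterated partials with multiDeriv of updated index
  have termId : ∀ (β : Fin (ℓ + 1) → ℕ) (m : ℕ),
      (partialDeriv 0)^[m] (tdv (fun i => β i.succ) F) = multiDeriv (Function.update β 0 m) F := by
    intro β m
    rw [multiDeriv_split]
    have h0 : Function.update β 0 m 0 = m := Function.update_self _ _ _
    have ht : (fun i : Fin ℓ => Function.update β 0 m i.succ) = fun i => β i.succ :=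
      funext fun i => Function.update_of_ne (Fin.succ_ne_zero i) _ _
    rw [h0, ht]
  -- per-term bound
  have termBound : ∀ β : Fin (ℓ + 1) → ℕ, (∑ i, β i) ≤ r →
      ∀ q ∈ fdb (β 0), ∀ x, DegLexLT (Function.update β 0 q.length) α →
      |termVal q φ (tdv (fun i => β i.succ) F) x| ≤ wt q := by
    intro β hβ q hq x hdl
    obtain ⟨hqs, hql⟩ := mem_fdb hq
    have hβ0 : β 0 ≤ r := by have := sum_split β; omega
    rw [termVal, termId β q.length, abs_mul]
    have h1 : |PP q φ x| ≤ wt q := by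
      apply abs_PP_le
      intro j hj
      exact hφb j (by have := elem_le_sum hj; omega) _
    have h2 : |multiDeriv (Function.update β 0 q.length) F (rp φ x)| ≤ 1 := hFb _ hdl _
    calc |PP q φ x| * |multiDeriv (Function.update β 0 q.length) F (rp φ x)|
        ≤ wt q * 1 := mul_le_mul h1 h2 (abs_nonneg _) (wt_nonneg q)
      _ = wt q := mul_one _
  constructor
  · -- bounded lower-order derivatives
    intro β hdl x
    have hβr : (∑ i, β i) ≤ r := by
      rcases hdl with h | ⟨h, _⟩ <;> omega
    have hrw : (fun y => F (Function.update y 0 (φ (y 0)))) = fun y => F (rp φ y) := rfl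
    rw [hrw, main β hβr x]
    refine le_trans (abs_list_sum_le _ _ wt ?_) (le_trans (le_refl _) ?_)
    · intro q hq
      apply termBound β hβr q hq x
      obtain ⟨hqs, hql⟩ := mem_fdb hq
      rcases Nat.eq_or_lt_of_le (show q.length ≤ β 0 by omega) with h | h
      · rw [h, Function.update_eq_self]
        exact hdl
      · left
        rw [sum_update]
        have hsle : (∑ i, β i) ≤ ∑ i, α i := by
          rcases hdl with h' | ⟨h', _⟩ <;> omega
        have := sum_split β
        omega
    · exact hCbC (β 0) (by have := sum_split β; omega)
  · -- the top-order identity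
    intro x
    have hrw : (fun y => F (Function.update y 0 (φ (y 0)))) = fun y => F (rp φ y) := rfl
    have hrx : Function.update x 0 (φ (x 0)) = rp φ x := rfl
    rw [hrw, hrx, main α hαr x, fdb_eq (α 0), List.map_cons, List.sum_cons]
    have htop : termVal (List.replicate (α 0) 1) φ (tdv (fun i => α i.succ) F) x
        = (deriv φ (x 0)) ^ (α 0) * multiDeriv α F (rp φ x) := by
      rw [termVal, List.length_replicate, termId α (α 0), Function.update_eq_self]
      congr 1
      rw [PP, List.map_replicate, List.prod_replicate, iteratedDeriv_one]
    rw [htop, add_sub_cancel_left]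
    refine le_trans (abs_list_sum_le _ _ wt ?_) ?_
    · intro q hq
      apply termBound α hαr q (by rw [fdb_eq (α 0)]; exact List.mem_cons_of_mem _ hq) x
      obtain ⟨hqs, hql⟩ := mem_errs hq
      left
      rw [sum_update]
      have := sum_split α
      omega
    · have hCbeq : Cb (α 0) = wt (List.replicate (α 0) 1) + ((errs (α 0)).map wt).sum := by
        show ((fdb (α 0)).map wt).sum = _
        rw [fdb_eq (α 0), List.map_cons, List.sum_cons]
      have hsub : ((errs (α 0)).map wt).sum ≤ Cb (α 0) := by
        have := wt_nonneg (List.replicate (α 0) 1)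
        linarith
      exact le_trans hsub (hCbC (α 0) (by have := sum_split α; omega))
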